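/- Let α_i, α_j ∈ {0,1} with associated coordinates: if α_r = 0 then e^{f_r} = e^{u_r}, and if α_r = 1 then e^{f_r} = -1/sinh u_r with u_r < 0. Suppose cosh l_{ij} = -sqrt((1+α_i e^{2f_i})(1+α_j e^{2f_j})) + η_{ij} e^{f_i+f_j} > 1 with η_{ij} > 0. Then: if α_i = α_j = 0 this is equivalent to u_i + u_j > log(2/η_{ij}); if α_i = 0, α_j = 1 it is equivalent to u_i + u_j > log(1/η_{ij}); and if α_i = α_j = 1 it is equivalent to cosh(u_i + u_j) < η_{ij} (requiring η_{ij} > 1), i.e., u_i + u_j > -arccosh(η_{ij}) given u_i, u_j < 0. -/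

import Mathlib

open Real

/-- `arcosh x = log (x + √(x² - 1))`, the inverse of `cosh` on `[0,∞)`. -/
noncomputable def arcosh (x : ℝ) : ℝ := Real.log (x + Real.sqrt (x ^ 2 - 1))

lemma arcosh_nonneg {x : ℝ} (hx : 1 ≤ x) : 0 ≤ _root_.arcosh x := by
  apply Real.log_nonneg
  have : (0:ℝ) ≤ Real.sqrt (x ^ 2 - 1) := Real.sqrt_nonneg _
  linarith

lemma cosh_arcosh {x : ℝ} (hx : 1 ≤ x) : Real.cosh (_root_.arcosh x) = x := by
  have h1 : (0:ℝ) ≤ x ^ 2 - 1 := by nlinarith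
  have hs : Real.sqrt (x ^ 2 - 1) ^ 2 = x ^ 2 - 1 := Real.sq_sqrt h1
  have hpos : 0 < x + Real.sqrt (x ^ 2 - 1) := by
    have := Real.sqrt_nonneg (x ^ 2 - 1); linarith
  rw [_root_.arcosh, Real.cosh_eq, Real.exp_log hpos, Real.exp_neg, Real.exp_log hpos]
  rw [div_eq_iff (by norm_num : (2:ℝ) ≠ 0)]
  field_simp
  nlinarith [Real.sqrt_nonneg (x ^ 2 - 1)]

/-- Description of the admissible space in the `u`-coordinates for the discrete
conformal structure (A1), for the three cases `(αᵢ,αⱼ) = (0,0), (0,1), (1,1)`: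
`cosh l_ij > 1` is equivalent to a linear condition on `uᵢ + uⱼ`. -/
theorem admissible_space_A1_cases (η : ℝ) (hη : 0 < η) :
    -- case αᵢ = αⱼ = 0 : e^{f_r} = e^{u_r}
    (∀ ui uj : ℝ,
      (1 < -1 + η * Real.exp (ui + uj) ↔ Real.log (2 / η) < ui + uj)) ∧
    -- case αᵢ = 0, αⱼ = 1 : e^{f_i} = e^{u_i}, e^{f_j} = -1/sinh uⱼ, uⱼ < 0
    (∀ ui uj : ℝ, uj < 0 →
      (1 < Real.cosh uj / Real.sinh uj + η * Real.exp ui * (-1 / Real.sinh uj) ↔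
        Real.log (1 / η) < ui + uj)) ∧
    -- case αᵢ = αⱼ = 1 : e^{f_r} = -1/sinh u_r, u_r < 0, requiring η > 1
    (1 < η → ∀ ui uj : ℝ, ui < 0 → uj < 0 →
      ((1 < -(Real.cosh ui / Real.sinh ui) * (Real.cosh uj / Real.sinh uj)
          + η * (1 / (Real.sinh ui * Real.sinh uj)) ↔
        Real.cosh (ui + uj) < η) ∧
       (Real.cosh (ui + uj) < η ↔ -_root_.arcosh η < ui + uj))) := by
  refine ⟨?_, ?_, ?_⟩
  · intro ui uj
    rw [Real.log_lt_iff_lt_exp (by positivity), div_lt_iff₀ hη]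
    constructor <;> intro h <;> nlinarith
  · intro ui uj huj
    have hs : Real.sinh uj < 0 := Real.sinh_neg_iff.mpr huj
    have key : Real.cosh uj - Real.sinh uj = Real.exp (-uj) := by
      rw [Real.cosh_eq, Real.sinh_eq]; ring
    have hE : Real.exp (-uj) * Real.exp uj = 1 := by
      rw [← Real.exp_add]; simp
    have heq : Real.cosh uj / Real.sinh uj + η * Real.exp ui * (-1 / Real.sinh uj)
        = (Real.cosh uj - η * Real.exp ui) / Real.sinh uj := by
      field_simp
      ring
    rw [heq, lt_div_iff_of_neg hs, one_mul,
      Real.log_lt_iff_lt_exp (by positivity), Real.exp_add, div_lt_iff₀ hη]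
    constructor <;> intro h
    · nlinarith [Real.exp_pos ui, Real.exp_pos uj]
    · nlinarith [Real.exp_pos ui, Real.exp_pos uj]
  · intro hη1 ui uj hui huj
    have hsi : Real.sinh ui < 0 := Real.sinh_neg_iff.mpr hui
    have hsj : Real.sinh uj < 0 := Real.sinh_neg_iff.mpr huj
    have hp : 0 < Real.sinh ui * Real.sinh uj := mul_pos_of_neg_of_neg hsi hsj
    have hadd : Real.cosh (ui + uj) = Real.cosh ui * Real.cosh uj + Real.sinh ui * Real.sinh uj :=
      Real.cosh_add ui uj
    constructor
    · have heq : -(Real.cosh ui / Real.sinh ui) * (Real.cosh uj / Real.sinh uj)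
          + η * (1 / (Real.sinh ui * Real.sinh uj))
          = (η - Real.cosh ui * Real.cosh uj) / (Real.sinh ui * Real.sinh uj) := by
        field_simp
        ring
      rw [heq, lt_div_iff₀ hp, one_mul, hadd]
      constructor <;> intro h <;> linarith
    · have hca := _root_.cosh_arcosh (le_of_lt hη1)
      have hneg : ui + uj < 0 := by linarith
      rw [← hca, Real.cosh_lt_cosh, abs_of_nonneg (_root_.arcosh_nonneg (le_of_lt hη1)),
        abs_of_neg hneg, hca]
      constructor <;> intro h <;> linarith
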